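/- arXiv:1812.11101 — 2 statements merged into one kernel-verified Lean document; each statement's English description precedes it below -/
import Mathlib

section
/- As h → ∞, F_1(h) = 1 − (h + 2/h + O(1/h³)) φ(h); that is, there exist constants C > 0 and h₀ such that for all h ≥ h₀, | F_1(h) − 1 + (h + 2/h)φ(h) | ≤ C φ(h)/h³, where F_1(h) = Φ(h)² − φ(h)[hΦ(h) + φ(h)]. -/
open MeasureTheory ProbabilityTheory Real Set Filter

/-- The standard normal density `φ(x) = (2π)^{-1/2} exp(-x²/2)`. -/
noncomputable def stdPhi (x : ℝ) : ℝ := (Real.sqrt (2 * Real.pi))⁻¹ * Real.exp (-x ^ 2 / 2)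

/-- The standard normal distribution function `Φ(x) = ∫_{-∞}^x φ(t) dt`. -/
noncomputable def stdCdf (x : ℝ) : ℝ := ∫ t in Set.Iic x, stdPhi t

lemma stdPhi_pos (x : ℝ) : 0 < stdPhi x := by
  have : 0 < Real.sqrt (2 * Real.pi) := Real.sqrt_pos.2 (by positivity)
  unfold stdPhi; positivity

lemma stdPhi_integrable : Integrable stdPhi := by
  have := (integrable_exp_neg_mul_sq (b := (1/2 : ℝ)) (by norm_num)).const_mul
    (Real.sqrt (2 * Real.pi))⁻¹
  refine this.congr ?_
  filter_upwards with x
  simp only [stdPhi]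
  ring_nf

lemma stdPhi_total : ∫ x, stdPhi x = 1 := by
  have h1 : ∀ x : ℝ, stdPhi x = (Real.sqrt (2 * Real.pi))⁻¹ * Real.exp (-(1/2) * x ^ 2) := by
    intro x; simp only [stdPhi]; ring_nf
  simp_rw [h1, integral_const_mul, integral_gaussian]
  rw [show (Real.pi / (1/2)) = 2 * Real.pi by ring]
  have : (0:ℝ) < Real.sqrt (2 * Real.pi) := Real.sqrt_pos.2 (by positivity)
  field_simp

lemma hasDerivAt_stdPhi (x : ℝ) : HasDerivAt stdPhi (-x * stdPhi x) x := by
  have h1 : HasDerivAt (fun y : ℝ => -y ^ 2 / 2) (-x) x := by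
    have := ((hasDerivAt_pow 2 x).neg).div_const 2
    refine this.congr_deriv ?_; ring
  have h2 := (h1.exp).const_mul (Real.sqrt (2 * Real.pi))⁻¹
  have : stdPhi = fun y : ℝ => (Real.sqrt (2 * Real.pi))⁻¹ * Real.exp (-y ^ 2 / 2) := rfl
  rw [this]
  refine h2.congr_deriv ?_
  simp only [stdPhi]; ring

lemma tendsto_stdPhi : Tendsto stdPhi atTop (nhds 0) := by
  have h1 : Tendsto (fun x : ℝ => -x ^ 2 / 2) atTop atBot := by
    apply Filter.Tendsto.atBot_div_const (by norm_num)
    exact tendsto_neg_atBot_iff.2 (tendsto_pow_atTop (two_ne_zero))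
  have := (Real.tendsto_exp_atBot).comp h1
  have h2 := this.const_mul (Real.sqrt (2 * Real.pi))⁻¹
  rw [mul_zero] at h2
  exact h2.congr fun x => by simp [stdPhi, Function.comp]

lemma hasDerivAt_negPhi (x : ℝ) : HasDerivAt (fun t => -stdPhi t) (x * stdPhi x) x := by
  have := (hasDerivAt_stdPhi x).neg
  refine this.congr_deriv ?_; ring

lemma tendsto_negPhi : Tendsto (fun t => -stdPhi t) atTop (nhds 0) := by
  simpa using tendsto_stdPhi.neg

lemma mul_stdPhi_nonneg {h : ℝ} (hh : 0 < h) : ∀ x ∈ Ioi h, 0 ≤ x * stdPhi x :=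
  fun x hx => mul_nonneg (hh.trans hx).le (stdPhi_pos x).le

lemma integrableOn_mul_stdPhi {h : ℝ} (hh : 0 < h) :
    IntegrableOn (fun t => t * stdPhi t) (Ioi h) :=
  integrableOn_Ioi_deriv_of_nonneg' (fun x _ => hasDerivAt_negPhi x)
    (mul_stdPhi_nonneg hh) tendsto_negPhi

lemma integral_mul_stdPhi {h : ℝ} (hh : 0 < h) :
    ∫ t in Ioi h, t * stdPhi t = stdPhi h := by
  have := integral_Ioi_of_hasDerivAt_of_nonneg' (fun x _ => hasDerivAt_negPhi x)
    (mul_stdPhi_nonneg hh) tendsto_negPhi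
  simpa using this

lemma hasDerivAt_millAux {x : ℝ} (hx : 0 < x) :
    HasDerivAt (fun t : ℝ => -((t⁻¹ - (t ^ 3)⁻¹) * stdPhi t)) ((1 - 3 / x ^ 4) * stdPhi x) x := by
  have h1 : HasDerivAt (fun t : ℝ => t⁻¹ - (t ^ 3)⁻¹)
      (-(x ^ 2)⁻¹ - -(↑3 * x ^ 2) / (x ^ 3) ^ 2) x :=
    (hasDerivAt_inv hx.ne').sub ((hasDerivAt_pow 3 x).inv (pow_ne_zero 3 hx.ne'))
  have h2 := (h1.mul (hasDerivAt_stdPhi x)).neg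
  refine h2.congr_deriv ?_
  have hx' : x ≠ 0 := hx.ne'
  field_simp
  ring

lemma tendsto_millAux :
    Tendsto (fun t : ℝ => -((t⁻¹ - (t ^ 3)⁻¹) * stdPhi t)) atTop (nhds 0) := by
  have h1 : Tendsto (fun t : ℝ => t⁻¹ - (t ^ 3)⁻¹) atTop (nhds 0) := by
    have := tendsto_inv_atTop_zero (𝕜 := ℝ)
    have h2 := this.comp (tendsto_pow_atTop (three_ne_zero))
    simpa using this.sub h2
  have := (h1.mul tendsto_stdPhi).neg
  simpa using this

lemma millAux_nonneg {h : ℝ} (hh : 2 ≤ h) : ∀ x ∈ Ioi h, 0 ≤ (1 - 3 / x ^ 4) * stdPhi x := by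
  intro x hx
  have hx2 : (2:ℝ) < x := lt_of_le_of_lt hh hx
  have h4 : (16:ℝ) ≤ x ^ 4 := by
    calc (16:ℝ) = 2 ^ 4 := by norm_num
    _ ≤ x ^ 4 := pow_le_pow_left₀ (by norm_num) hx2.le 4
  have : 3 / x ^ 4 ≤ 1 := by
    rw [div_le_one (by nlinarith)]; nlinarith
  exact mul_nonneg (by linarith) (stdPhi_pos x).le

lemma integrableOn_millAux {h : ℝ} (hh : 2 ≤ h) :
    IntegrableOn (fun t => (1 - 3 / t ^ 4) * stdPhi t) (Ioi h) :=
  integrableOn_Ioi_deriv_of_nonneg'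
    (fun x hx => hasDerivAt_millAux (lt_of_lt_of_le (by norm_num) (hh.trans hx)))
    (millAux_nonneg hh) tendsto_millAux

lemma integral_millAux {h : ℝ} (hh : 2 ≤ h) :
    ∫ t in Ioi h, (1 - 3 / t ^ 4) * stdPhi t = (h⁻¹ - (h ^ 3)⁻¹) * stdPhi h := by
  have := integral_Ioi_of_hasDerivAt_of_nonneg'
    (fun x hx => hasDerivAt_millAux (lt_of_lt_of_le (by norm_num) (hh.trans hx)))
    (millAux_nonneg hh) tendsto_millAux
  simpa using this

lemma stdCdf_eq (h : ℝ) : stdCdf h = 1 - ∫ t in Ioi h, stdPhi t := by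
  have := intervalIntegral.integral_Iic_add_Ioi (μ := volume) (b := h)
    stdPhi_integrable.integrableOn stdPhi_integrable.integrableOn
  rw [stdPhi_total] at this
  unfold stdCdf; linarith

lemma Q_le {h : ℝ} (hh : 1 ≤ h) : ∫ t in Ioi h, stdPhi t ≤ stdPhi h / h := by
  have h0 : (0:ℝ) < h := by linarith
  have hmono : ∫ t in Ioi h, stdPhi t ≤ ∫ t in Ioi h, h⁻¹ * (t * stdPhi t) := by
    apply setIntegral_mono_on stdPhi_integrable.integrableOn
      ((integrableOn_mul_stdPhi h0).const_mul h⁻¹) measurableSet_Ioi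
    intro x hx
    have hx0 : h < x := hx
    have h1 : 1 ≤ h⁻¹ * x := by
      rw [← inv_mul_cancel₀ h0.ne']
      exact mul_le_mul_of_nonneg_left hx0.le (inv_pos.2 h0).le
    calc stdPhi x = 1 * stdPhi x := by ring
    _ ≤ (h⁻¹ * x) * stdPhi x := mul_le_mul_of_nonneg_right h1 (stdPhi_pos x).le
    _ = h⁻¹ * (x * stdPhi x) := by ring
  rwa [integral_const_mul, integral_mul_stdPhi h0, inv_mul_eq_div] at hmono

lemma Q_lower {h : ℝ} (hh : 2 ≤ h) :
    (h⁻¹ - (h ^ 3)⁻¹) * stdPhi h ≤ ∫ t in Ioi h, stdPhi t := by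
  rw [← integral_millAux hh]
  apply setIntegral_mono_on (integrableOn_millAux hh)
    stdPhi_integrable.integrableOn measurableSet_Ioi
  intro x hx
  have hx0 : (0:ℝ) < x := lt_of_lt_of_le (by norm_num) (hh.trans (le_of_lt hx))
  have : 0 ≤ 3 / x ^ 4 := by positivity
  nlinarith [stdPhi_pos x]

lemma Q_upper2 {h : ℝ} (hh : 2 ≤ h) :
    (∫ t in Ioi h, stdPhi t) - (h⁻¹ - (h ^ 3)⁻¹) * stdPhi h ≤ 3 / h ^ 5 * stdPhi h := by
  have h0 : (0:ℝ) < h := by linarith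
  rw [← integral_millAux hh,
    ← integral_sub stdPhi_integrable.integrableOn (integrableOn_millAux hh)]
  have hmono : (∫ t in Ioi h, (stdPhi t - (1 - 3 / t ^ 4) * stdPhi t))
      ≤ ∫ t in Ioi h, 3 / h ^ 5 * (t * stdPhi t) := by
    apply setIntegral_mono_on
      (stdPhi_integrable.integrableOn.sub (integrableOn_millAux hh))
      ((integrableOn_mul_stdPhi h0).const_mul _) measurableSet_Ioi
    intro x hx
    have hx0 : h < x := hx
    have hxp : (0:ℝ) < x := h0.trans hx0
    have h5 : h ^ 5 ≤ x ^ 5 := pow_le_pow_left₀ h0.le hx0.le 5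
    have key : 3 / x ^ 4 ≤ 3 / h ^ 5 * x := by
      rw [div_le_iff₀ (by positivity), div_mul_eq_mul_div, div_mul_eq_mul_div,
        le_div_iff₀ (by positivity)]
      nlinarith
    calc stdPhi x - (1 - 3 / x ^ 4) * stdPhi x = 3 / x ^ 4 * stdPhi x := by ring
    _ ≤ (3 / h ^ 5 * x) * stdPhi x := mul_le_mul_of_nonneg_right key (stdPhi_pos x).le
    _ = 3 / h ^ 5 * (x * stdPhi x) := by ring
  rwa [integral_const_mul, integral_mul_stdPhi h0] at hmono

/-- As `h → ∞`, `F_1(h) = 1 - (h + 2/h + O(1/h³)) φ(h)`, where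
`F_1(h) = Φ(h)² - φ(h)(hΦ(h) + φ(h))`. -/
theorem F1_asymptotics :
    ∃ C > (0 : ℝ), ∃ h₀ : ℝ, ∀ h ≥ h₀,
      |(stdCdf h ^ 2 - stdPhi h * (h * stdCdf h + stdPhi h)) - 1
          + (h + 2 / h) * stdPhi h| ≤ C * stdPhi h / h ^ 3 := by
  refine ⟨13, by norm_num, 3, fun h hh => ?_⟩
  have h0 : (0:ℝ) < h := by linarith
  have hne : h ≠ 0 := h0.ne'
  set φ := stdPhi h with hφdef
  set Q := ∫ t in Ioi h, stdPhi t with hQdef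
  have hφ : 0 < φ := stdPhi_pos h
  have hP : stdCdf h = 1 - Q := stdCdf_eq h
  have hQ0 : 0 ≤ Q := setIntegral_nonneg measurableSet_Ioi (fun x _ => (stdPhi_pos x).le)
  have hQ1 : Q ≤ φ / h := Q_le (by linarith)
  have hr0 : 0 ≤ Q - (h⁻¹ - (h ^ 3)⁻¹) * φ := by linarith [Q_lower (show 2 ≤ h by linarith)]
  have hr1 : Q - (h⁻¹ - (h ^ 3)⁻¹) * φ ≤ 3 / h ^ 5 * φ := Q_upper2 (by linarith)
  -- h * φ ≤ 1
  have hφ1 : h * φ ≤ 1 := by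
    have hc : 1 ≤ Real.sqrt (2 * Real.pi) := by
      rw [show (1:ℝ) = Real.sqrt 1 by simp]
      exact Real.sqrt_le_sqrt (by nlinarith [Real.pi_gt_three])
    have h2 : φ ≤ Real.exp (-h ^ 2 / 2) := by
      rw [hφdef]
      unfold stdPhi
      nlinarith [Real.exp_pos (-h ^ 2 / 2), inv_le_one_of_one_le₀ hc,
        (Real.exp_pos (-h ^ 2 / 2)).le]
    have h3 : h ≤ Real.exp (h ^ 2 / 2) := by
      nlinarith [Real.add_one_le_exp (h ^ 2 / 2), sq_nonneg (h - 1)]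
    have h4 : h * Real.exp (-h ^ 2 / 2) ≤ 1 := by
      rw [show -h ^ 2 / 2 = -(h ^ 2 / 2) by ring, Real.exp_neg]
      calc h * (Real.exp (h ^ 2 / 2))⁻¹ ≤ Real.exp (h ^ 2 / 2) * (Real.exp (h ^ 2 / 2))⁻¹ :=
            mul_le_mul_of_nonneg_right h3 (by positivity)
      _ = 1 := mul_inv_cancel₀ (Real.exp_pos _).ne'
    nlinarith [mul_le_mul_of_nonneg_left h2 h0.le]
  -- key algebraic identity
  have key : (stdCdf h ^ 2 - φ * (h * stdCdf h + φ)) - 1 + (h + 2 / h) * φ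
      = 2 * φ / h ^ 3 - φ ^ 2 / h ^ 2 + Q ^ 2
        + (Q - (h⁻¹ - (h ^ 3)⁻¹) * φ) * (h * φ - 2) := by
    rw [hP]; field_simp; ring
  have e1 : φ ^ 2 / h ^ 2 ≤ φ / h ^ 3 := by
    rw [div_le_div_iff₀ (by positivity) (by positivity)]
    nlinarith [mul_le_mul_of_nonneg_right hφ1 (show (0:ℝ) ≤ φ * h ^ 2 by positivity)]
  have e2 : Q ^ 2 ≤ φ ^ 2 / h ^ 2 := by
    have := pow_le_pow_left₀ hQ0 hQ1 2
    rwa [div_pow] at this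
  set r := Q - (h⁻¹ - (h ^ 3)⁻¹) * φ with hrdef
  clear_value φ Q r
  have hr3 : r ≤ 3 * (φ / h ^ 3) := by
    have h35 : h ^ 3 ≤ h ^ 5 := pow_le_pow_right₀ (by linarith) (by norm_num)
    have : 3 / h ^ 5 * φ ≤ 3 * (φ / h ^ 3) := by
      rw [mul_div_assoc'] at *
      rw [div_mul_eq_mul_div, div_le_div_iff₀ (by positivity) (by positivity)]
      nlinarith
    linarith
  have hA : r * (h * φ - 2) ≤ 0 :=
    mul_nonpos_of_nonneg_of_nonpos hr0 (by linarith)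
  have hB : -(6 * (φ / h ^ 3)) ≤ r * (h * φ - 2) := by
    have hexp : r * (h * φ - 2) = r * (h * φ) - 2 * r := by ring
    have h1 : 0 ≤ r * (h * φ) := mul_nonneg hr0 (mul_nonneg h0.le hφ.le)
    linarith
  have e0 : 0 ≤ φ ^ 2 / h ^ 2 := by positivity
  have e3 : 0 ≤ Q ^ 2 := sq_nonneg Q
  have e4 : (0:ℝ) ≤ φ / h ^ 3 := by positivity
  have key' : (stdCdf h ^ 2 - φ * (h * stdCdf h + φ)) - 1 + (h + 2 / h) * φ
      = 2 * (φ / h ^ 3) - φ ^ 2 / h ^ 2 + Q ^ 2 + r * (h * φ - 2) := by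
    rw [key]; ring
  rw [key', show 13 * φ / h ^ 3 = 13 * (φ / h ^ 3) by ring, abs_le]
  constructor
  · generalize r * (h * φ - 2) = d at hA hB ⊢
    generalize φ / h ^ 3 = a at *
    linarith
  · generalize r * (h * φ - 2) = d at hA hB ⊢
    generalize φ / h ^ 3 = a at *
    linarith
end

section
/- Fix c ≥ 1, set β = 1/(c + 2), and define ξ₃(t) = (1 + c²)^{−1/2} · [ W(t + 1) + c·W(t + (c+1)β) − c·W(t + β) − W(t) ] for t ≥ 0, where W is a standard Brownian motion. Then for all t, t' ≥ 0: E[ξ₃(t)] = 0, E[ξ₃(t)²] = 1, and E[ξ₃(t)ξ₃(t')] = ρ₃(t − t'), where ρ₃(t) = 1 − |t| for 0 ≤ |t| ≤ β; ρ₃(t) = (1+c)·(1 + c²β − |t|(1+c))/(1 + c²) for β ≤ |t| ≤ cβ; ρ₃(t) = (1 + c + c²β − |t|(1 + 2c))/(1 + c²) for cβ ≤ |t| ≤ (c+1)β; ρ₃(t) = (1 − |t|)/(1 + c²) for (c+1)β ≤ |t| ≤ 1; and ρ₃(t) = 0 for |t| ≥ 1. -/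
open MeasureTheory ProbabilityTheory Real Set Filter

/-- `W` is a standard Brownian motion (Wiener process) on the probability space `(Ω, μ)`:
a Gaussian process with `W(0) = 0`, mean zero and covariance `E[W(s)W(t)] = min s t`
for `s, t ≥ 0`. -/
def IsStdBM {Ω : Type*} [MeasurableSpace Ω] (μ : Measure Ω) (W : ℝ → Ω → ℝ) : Prop :=
  IsProbabilityMeasure μ ∧
  (∀ t, Measurable (W t)) ∧
  (∀ ω, W 0 ω = 0) ∧
  (∀ (n : ℕ) (t c : Fin n → ℝ), ∃ v : NNReal,
      Measure.map (fun ω => ∑ i, c i * W (t i) ω) μ = gaussianReal 0 v) ∧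
  (∀ t, 0 ≤ t → ∫ ω, W t ω ∂μ = 0) ∧
  (∀ s t, 0 ≤ s → 0 ≤ t → ∫ ω, W s ω * W t ω ∂μ = min s t)

/-- The correlation function `ρ₃` of the process `ξ₃` built from a standard Brownian
motion with parameter `c ≥ 1` and `β = 1/(c + 2)`. -/
noncomputable def rho3 (c t : ℝ) : ℝ :=
  if |t| ≤ 1 / (c + 2) then 1 - |t|
  else if |t| ≤ c * (1 / (c + 2)) then
    (1 + c) * (1 + c ^ 2 * (1 / (c + 2)) - |t| * (1 + c)) / (1 + c ^ 2)
  else if |t| ≤ (c + 1) * (1 / (c + 2)) then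
    (1 + c + c ^ 2 * (1 / (c + 2)) - |t| * (1 + 2 * c)) / (1 + c ^ 2)
  else if |t| ≤ 1 then (1 - |t|) / (1 + c ^ 2)
  else 0

/- ### Auxiliary integrability lemmas -/

lemma gaussian_sq_integrable (v : NNReal) :
    Integrable (fun x : ℝ => x ^ 2) (gaussianReal 0 v) := by
  by_cases hv : v = 0
  · rw [hv, gaussianReal_zero_var]
    exact (integrable_const ((0:ℝ) ^ 2)).congr (ae_eq_dirac (fun x : ℝ => x ^ 2)).symm
  · rw [gaussianReal_of_var_ne_zero _ hv]
    rw [integrable_withDensity_iff (measurable_gaussianPDF _ _)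
      (ae_of_all _ fun _ => ENNReal.ofReal_lt_top)]
    have hv0 : (0:ℝ) < (v:ℝ) := by positivity
    have h := (integrable_rpow_mul_exp_neg_mul_sq (b := (2*(v:ℝ))⁻¹)
      (by positivity) (s := 2) (by norm_num)).const_mul ((Real.sqrt (2 * Real.pi * v))⁻¹)
    refine h.congr (ae_of_all _ fun x => ?_)
    have hx : x ^ (2:ℝ) = x ^ 2 := by
      rw [show (2:ℝ) = ((2:ℕ):ℝ) by norm_num, Real.rpow_natCast]
    simp only [gaussianPDF, gaussianPDFReal]
    rw [ENNReal.toReal_ofReal (by positivity), hx]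
    have harg : -(x - 0) ^ 2 / (2 * (v:ℝ)) = -(2*(v:ℝ))⁻¹ * x ^ 2 := by
      field_simp
      ring
    rw [harg]
    ring

lemma gaussian_memL2 (v : NNReal) : MemLp (id : ℝ → ℝ) 2 (gaussianReal 0 v) :=
  (memLp_two_iff_integrable_sq measurable_id.aestronglyMeasurable).2
    (by simpa using gaussian_sq_integrable v)

lemma gaussian_integrable_id (v : NNReal) : Integrable (id : ℝ → ℝ) (gaussianReal 0 v) :=
  memLp_one_iff_integrable.1 ((gaussian_memL2 v).mono_exponent (by norm_num))

section BM

variable {Ω : Type*} [MeasurableSpace Ω] {μ : Measure Ω} {W : ℝ → Ω → ℝ}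

lemma comb_integrable_sq (hW : IsStdBM μ W) (a b x y : ℝ) :
    Integrable (fun ω => (a * W x ω + b * W y ω) ^ 2) μ := by
  obtain ⟨_, hmeas, _, hgauss, _, _⟩ := hW
  obtain ⟨v, hv⟩ := hgauss 2 ![x, y] ![a, b]
  have hfun : (fun ω => ∑ i, ![a,b] i * W (![x,y] i) ω)
      = fun ω => a * W x ω + b * W y ω := by
    funext ω; simp [Fin.sum_univ_two]
  rw [hfun] at hv
  have hint : Integrable (fun z : ℝ => z ^ 2)
      (Measure.map (fun ω => a * W x ω + b * W y ω) μ) := by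
    rw [hv]; exact gaussian_sq_integrable v
  have hmeasf : AEMeasurable (fun ω => a * W x ω + b * W y ω) μ :=
    (((hmeas x).const_mul a).add ((hmeas y).const_mul b)).aemeasurable
  rw [integrable_map_measure (by fun_prop) hmeasf] at hint
  simpa [Function.comp_def] using hint

lemma WW_integrable (hW : IsStdBM μ W) (x y : ℝ) :
    Integrable (fun ω => W x ω * W y ω) μ := by
  have h1 := comb_integrable_sq hW 1 1 x y
  have h2 := comb_integrable_sq hW 1 0 x y
  have h3 := comb_integrable_sq hW 0 1 x y
  have h := ((h1.sub h2).sub h3).div_const 2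
  refine h.congr (ae_of_all _ fun ω => ?_)
  simp only [Pi.sub_apply, Pi.add_apply]
  ring

lemma W_integrable (hW : IsStdBM μ W) (x : ℝ) : Integrable (W x) μ := by
  obtain ⟨_, hmeas, _, hgauss, _, _⟩ := hW
  obtain ⟨v, hv⟩ := hgauss 1 ![x] ![1]
  have hfun : (fun ω => ∑ i, ![(1:ℝ)] i * W (![x] i) ω) = W x := by
    funext ω; simp
  rw [hfun] at hv
  have hint : Integrable (id : ℝ → ℝ) (Measure.map (W x) μ) := by
    rw [hv]; exact gaussian_integrable_id v
  rw [integrable_map_measure aestronglyMeasurable_id (hmeas x).aemeasurable] at hint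
  simpa [Function.comp] using hint

end BM

/- ### The key algebraic computation -/

lemma key_alg (c t t' u : ℝ) (hc : 1 ≤ c) (ht' : 0 ≤ t') (hle : t' ≤ t)
    (hu : u = 1 / (c + 2)) :
    (min (t+1) (t'+1) + c * min (t+1) (t'+(c+1)*u) - c * min (t+1) (t'+u) - min (t+1) t')
    + c * (min (t+(c+1)*u) (t'+1) + c * min (t+(c+1)*u) (t'+(c+1)*u)
        - c * min (t+(c+1)*u) (t'+u) - min (t+(c+1)*u) t')
    - c * (min (t+u) (t'+1) + c * min (t+u) (t'+(c+1)*u)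
        - c * min (t+u) (t'+u) - min (t+u) t')
    - (min t (t'+1) + c * min t (t'+(c+1)*u) - c * min t (t'+u) - min t t')
    = (1 + c^2) * rho3 c (t - t') := by
  have hc2 : (0:ℝ) < c + 2 := by linarith
  have hc2' : c + 2 ≠ 0 := ne_of_gt hc2
  have hu0 : 0 < u := by rw [hu]; positivity
  have h1 : c * u + 2 * u = 1 := by rw [hu]; field_simp
  have hcu : u ≤ c * u := by nlinarith
  have habs : |t - t'| = t - t' := abs_of_nonneg (by linarith)
  simp only [rho3, habs, ← hu]
  rw [min_eq_right (by linarith : t' + 1 ≤ t + 1),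
      min_eq_right (by linarith : t' + (c+1)*u ≤ t + 1),
      min_eq_right (by linarith : t' + u ≤ t + 1),
      min_eq_right (by linarith : t' ≤ t + 1),
      min_eq_right (by linarith : t' + (c+1)*u ≤ t + (c+1)*u),
      min_eq_right (by linarith : t' + u ≤ t + (c+1)*u),
      min_eq_right (by linarith : t' ≤ t + (c+1)*u),
      min_eq_right (by linarith : t' + u ≤ t + u),
      min_eq_right (by linarith : t' ≤ t + u),
      min_eq_right (by linarith : t' ≤ t)]
  rcases le_or_gt (t - t') u with h | h
  · rw [if_pos h,
        min_eq_left (by linarith : t + (c+1)*u ≤ t' + 1),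
        min_eq_left (by linarith : t + u ≤ t' + 1),
        min_eq_left (by linarith : t + u ≤ t' + (c+1)*u),
        min_eq_left (by linarith : t ≤ t' + 1),
        min_eq_left (by linarith : t ≤ t' + (c+1)*u),
        min_eq_left (by linarith : t ≤ t' + u)]
    subst hu; field_simp; ring
  · rcases le_or_gt (t - t') (c * u) with h2 | h2
    · rw [if_neg (by linarith), if_pos (by linarith : t - t' ≤ c * u),
          min_eq_right (by linarith : t' + 1 ≤ t + (c+1)*u),
          min_eq_left (by linarith : t + u ≤ t' + 1),
          min_eq_left (by linarith : t + u ≤ t' + (c+1)*u),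
          min_eq_left (by linarith : t ≤ t' + 1),
          min_eq_left (by linarith : t ≤ t' + (c+1)*u),
          min_eq_right (by linarith : t' + u ≤ t)]
      subst hu; field_simp; ring
    · rcases le_or_gt (t - t') ((c+1) * u) with h3 | h3
      · rw [if_neg (by linarith), if_neg (by linarith),
            if_pos (by linarith : t - t' ≤ (c+1) * u),
            min_eq_right (by linarith : t' + 1 ≤ t + (c+1)*u),
            min_eq_left (by linarith : t + u ≤ t' + 1),
            min_eq_right (by linarith : t' + (c+1)*u ≤ t + u),
            min_eq_left (by linarith : t ≤ t' + 1),
            min_eq_left (by linarith : t ≤ t' + (c+1)*u),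
            min_eq_right (by linarith : t' + u ≤ t)]
        subst hu; field_simp; ring
      · rcases le_or_gt (t - t') 1 with h4 | h4
        · rw [if_neg (by linarith), if_neg (by linarith), if_neg (by linarith),
              if_pos (by linarith : t - t' ≤ 1),
              min_eq_right (by linarith : t' + 1 ≤ t + (c+1)*u),
              min_eq_right (by linarith : t' + 1 ≤ t + u),
              min_eq_right (by linarith : t' + (c+1)*u ≤ t + u),
              min_eq_left (by linarith : t ≤ t' + 1),
              min_eq_right (by linarith : t' + (c+1)*u ≤ t),
              min_eq_right (by linarith : t' + u ≤ t)]
          subst hu; field_simp; ring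
        · rw [if_neg (by linarith), if_neg (by linarith), if_neg (by linarith),
              if_neg (by linarith),
              min_eq_right (by linarith : t' + 1 ≤ t + (c+1)*u),
              min_eq_right (by linarith : t' + 1 ≤ t + u),
              min_eq_right (by linarith : t' + (c+1)*u ≤ t + u),
              min_eq_right (by linarith : t' + 1 ≤ t),
              min_eq_right (by linarith : t' + (c+1)*u ≤ t),
              min_eq_right (by linarith : t' + u ≤ t)]
          ring

lemma key_alg2 (c t t' u : ℝ) (hc : 1 ≤ c) (ht : 0 ≤ t) (ht' : 0 ≤ t')
    (hu : u = 1 / (c + 2)) :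
    (min (t+1) (t'+1) + c * min (t+1) (t'+(c+1)*u) - c * min (t+1) (t'+u) - min (t+1) t')
    + c * (min (t+(c+1)*u) (t'+1) + c * min (t+(c+1)*u) (t'+(c+1)*u)
        - c * min (t+(c+1)*u) (t'+u) - min (t+(c+1)*u) t')
    - c * (min (t+u) (t'+1) + c * min (t+u) (t'+(c+1)*u)
        - c * min (t+u) (t'+u) - min (t+u) t')
    - (min t (t'+1) + c * min t (t'+(c+1)*u) - c * min t (t'+u) - min t t')
    = (1 + c^2) * rho3 c (t - t') := by
  rcases le_total t' t with h | h
  · exact key_alg c t t' u hc ht' h hu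
  · have h2 := key_alg c t' t u hc ht h hu
    have heven : rho3 c (t - t') = rho3 c (t' - t) := by
      simp only [rho3]; rw [abs_sub_comm t t']
    rw [heven,
        min_comm (t+1) (t'+1), min_comm (t+1) (t'+(c+1)*u), min_comm (t+1) (t'+u),
        min_comm (t+1) t',
        min_comm (t+(c+1)*u) (t'+1), min_comm (t+(c+1)*u) (t'+(c+1)*u),
        min_comm (t+(c+1)*u) (t'+u), min_comm (t+(c+1)*u) t',
        min_comm (t+u) (t'+1), min_comm (t+u) (t'+(c+1)*u), min_comm (t+u) (t'+u),
        min_comm (t+u) t',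
        min_comm t (t'+1), min_comm t (t'+(c+1)*u), min_comm t (t'+u), min_comm t t']
    linear_combination h2

/- ### Main theorem -/

/-- The process `ξ₃(t) = (1+c²)^{-1/2} (W(t+1) + cW(t+(c+1)β) - cW(t+β) - W(t))` has
mean `0`, variance `1` and correlation function `ρ₃`. -/
theorem xi3_moments {Ω : Type*} [MeasurableSpace Ω] (μ : Measure Ω)
    (W : ℝ → Ω → ℝ) (hW : IsStdBM μ W) (c : ℝ) (hc : 1 ≤ c) :
    let β : ℝ := 1 / (c + 2)
    let ξ : ℝ → Ω → ℝ := fun t ω =>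
      (Real.sqrt (1 + c ^ 2))⁻¹ *
        (W (t + 1) ω + c * W (t + (c + 1) * β) ω - c * W (t + β) ω - W t ω)
    ∀ t t' : ℝ, 0 ≤ t → 0 ≤ t' →
      (∫ ω, ξ t ω ∂μ) = 0 ∧ (∫ ω, (ξ t ω) ^ 2 ∂μ) = 1 ∧
        (∫ ω, ξ t ω * ξ t' ω ∂μ) = rho3 c (t - t') := by
  have hIW : ∀ x, Integrable (W x) μ := W_integrable hW
  have hIWW : ∀ x y, Integrable (fun ω => W x ω * W y ω) μ := WW_integrable hW
  obtain ⟨hprob, hmeas, hW0, hgauss, hmean, hcov⟩ := hW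
  intro β ξ t t' ht ht'
  have hβ : β = 1 / (c + 2) := rfl
  have hc2 : (0:ℝ) < c + 2 := by linarith
  have hβ0 : 0 < β := by rw [hβ]; positivity
  have hβ1 : 0 < (c + 1) * β := mul_pos (by linarith) hβ0
  set k : ℝ := (Real.sqrt (1 + c ^ 2))⁻¹ with hk
  have hk2 : k ^ 2 = (1 + c ^ 2)⁻¹ := by
    rw [hk, inv_pow, Real.sq_sqrt (by positivity)]
  have h1c2 : (1 : ℝ) + c ^ 2 ≠ 0 := by positivity
  have iadd : ∀ (f g : Ω → ℝ), Integrable f μ → Integrable g μ →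
      Integrable (fun ω => f ω + g ω) μ := fun f g hf hg => hf.add hg
  have isub : ∀ (f g : Ω → ℝ), Integrable f μ → Integrable g μ →
      Integrable (fun ω => f ω - g ω) μ := fun f g hf hg => hf.sub hg
  have imul : ∀ (r : ℝ) (f : Ω → ℝ), Integrable f μ →
      Integrable (fun ω => r * f ω) μ := fun r f hf => hf.const_mul r
  -- integrability of W s * B
  have hABint : ∀ s s' : ℝ, Integrable (fun ω => W s ω *
      (W (s'+1) ω + c * W (s'+(c+1)*β) ω - c * W (s'+β) ω - W s' ω)) μ := by
    intro s s'
    have h := (((hIWW s (s'+1)).add ((hIWW s (s'+(c+1)*β)).const_mul c)).sub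
      ((hIWW s (s'+β)).const_mul c)).sub (hIWW s s')
    refine h.congr (ae_of_all _ fun ω => ?_)
    simp only [Pi.sub_apply, Pi.add_apply]
    ring
  -- ∫ W s * B
  have hB : ∀ s s' : ℝ, 0 ≤ s → 0 ≤ s' →
      ∫ ω, W s ω * (W (s'+1) ω + c * W (s'+(c+1)*β) ω - c * W (s'+β) ω - W s' ω) ∂μ
        = min s (s'+1) + c * min s (s'+(c+1)*β) - c * min s (s'+β) - min s s' := by
    intro s s' hs hs'
    rw [show (fun ω => W s ω *
        (W (s'+1) ω + c * W (s'+(c+1)*β) ω - c * W (s'+β) ω - W s' ω))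
      = fun ω => W s ω * W (s'+1) ω + c * (W s ω * W (s'+(c+1)*β) ω)
        - c * (W s ω * W (s'+β) ω) - W s ω * W s' ω from funext fun ω => by ring]
    rw [integral_sub (isub _ _ (iadd _ _ (hIWW _ _) (imul c _ (hIWW _ _)))
          (imul c _ (hIWW _ _))) (hIWW _ _),
        integral_sub (iadd _ _ (hIWW _ _) (imul c _ (hIWW _ _))) (imul c _ (hIWW _ _)),
        integral_add (hIWW _ _) (imul c _ (hIWW _ _)),
        integral_const_mul c _, integral_const_mul c _,
        hcov s (s'+1) hs (by linarith),
        hcov s (s'+(c+1)*β) hs (by linarith),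
        hcov s (s'+β) hs (by linarith),
        hcov s s' hs hs']
  -- ∫ A * B
  have hAB : ∀ a b : ℝ, 0 ≤ a → 0 ≤ b →
      ∫ ω, (W (a+1) ω + c * W (a+(c+1)*β) ω - c * W (a+β) ω - W a ω) *
        (W (b+1) ω + c * W (b+(c+1)*β) ω - c * W (b+β) ω - W b ω) ∂μ
        = (1 + c^2) * rho3 c (a - b) := by
    intro a b ha hb
    rw [show (fun ω => (W (a+1) ω + c * W (a+(c+1)*β) ω - c * W (a+β) ω - W a ω) *
        (W (b+1) ω + c * W (b+(c+1)*β) ω - c * W (b+β) ω - W b ω))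
      = fun ω => (W (a+1) ω * (W (b+1) ω + c * W (b+(c+1)*β) ω - c * W (b+β) ω - W b ω))
        + c * (W (a+(c+1)*β) ω * (W (b+1) ω + c * W (b+(c+1)*β) ω - c * W (b+β) ω - W b ω))
        - c * (W (a+β) ω * (W (b+1) ω + c * W (b+(c+1)*β) ω - c * W (b+β) ω - W b ω))
        - (W a ω * (W (b+1) ω + c * W (b+(c+1)*β) ω - c * W (b+β) ω - W b ω))
        from funext fun ω => by ring]
    rw [integral_sub (isub _ _ (iadd _ _ (hABint _ _) (imul c _ (hABint _ _)))
          (imul c _ (hABint _ _))) (hABint _ _),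
        integral_sub (iadd _ _ (hABint _ _) (imul c _ (hABint _ _))) (imul c _ (hABint _ _)),
        integral_add (hABint _ _) (imul c _ (hABint _ _)),
        integral_const_mul c _, integral_const_mul c _,
        hB (a+1) b (by linarith) hb,
        hB (a+(c+1)*β) b (by linarith) hb,
        hB (a+β) b (by linarith) hb,
        hB a b ha hb]
    exact key_alg2 c a b β hc ha hb hβ
  -- covariance of ξ
  have hco : ∀ a b : ℝ, 0 ≤ a → 0 ≤ b →
      ∫ ω, ξ a ω * ξ b ω ∂μ = rho3 c (a - b) := by
    intro a b ha hb
    have he : (fun ω => ξ a ω * ξ b ω) = fun ω => k ^ 2 *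
        ((W (a+1) ω + c * W (a+(c+1)*β) ω - c * W (a+β) ω - W a ω) *
         (W (b+1) ω + c * W (b+(c+1)*β) ω - c * W (b+β) ω - W b ω)) := by
      funext ω
      show (k * (W (a+1) ω + c * W (a+(c+1)*β) ω - c * W (a+β) ω - W a ω)) *
        (k * (W (b+1) ω + c * W (b+(c+1)*β) ω - c * W (b+β) ω - W b ω)) = _
      ring
    rw [he, integral_const_mul (k^2) _, hAB a b ha hb, hk2, inv_mul_cancel_left₀ h1c2]
  refine ⟨?_, ?_, hco t t' ht ht'⟩
  · -- mean
    have he : (fun ω => ξ t ω) = fun ω => k *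
        (W (t+1) ω + c * W (t+(c+1)*β) ω - c * W (t+β) ω - W t ω) := rfl
    rw [he, integral_const_mul k _,
        integral_sub (isub _ _ (iadd _ _ (hIW _) (imul c _ (hIW _))) (imul c _ (hIW _))) (hIW _),
        integral_sub (iadd _ _ (hIW _) (imul c _ (hIW _))) (imul c _ (hIW _)),
        integral_add (hIW _) (imul c _ (hIW _)),
        integral_const_mul c _, integral_const_mul c _,
        hmean (t+1) (by linarith), hmean (t+(c+1)*β) (by linarith),
        hmean (t+β) (by linarith), hmean t ht]
    ring
  · -- variance
    have he : (fun ω => (ξ t ω) ^ 2) = fun ω => ξ t ω * ξ t ω := funext fun ω => by ring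
    rw [he, hco t t ht ht, sub_self]
    have h0 : |(0:ℝ)| ≤ 1 / (c + 2) := by
      rw [abs_zero]; positivity
    simp only [rho3]
    rw [if_pos h0, abs_zero, sub_zero]
end
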